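/- For every z ∈ ℂ with |z| < 1 and all x, y ∈ ℂ, the series Σ_{r=0}^{∞} ((a)_r / r!) z^r · 𝓕₂⁽²⁾(a + r, b₁, b₂; c₁, c₂; t, k, x, y) converges and equals (1 − z)^{−a} · 𝓕₂⁽²⁾(a, b₁, b₂; c₁, c₂; t, k, x/(1−z), y/(1−z)), where (1 − z)^{−a} is the principal complex power. -/

import Mathlib

open Complex Finset

/-- Ascending Pochhammer symbol `(z)_j = z (z+1) ⋯ (z+j−1)`, with `(z)_0 = 1`. -/
noncomputable def poch (z : ℂ) (j : ℕ) : ℂ := (ascPochhammer ℂ j).eval z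

lemma poch_zero (b : ℂ) : poch b 0 = 1 := by simp [poch]

lemma poch_succ (b : ℂ) (r : ℕ) : poch b (r + 1) = poch b r * (b + r) := by
  simp [poch, ascPochhammer_succ_eval]

lemma poch_add (b : ℂ) (r s : ℕ) : poch b (r + s) = poch b r * poch (b + r) s := by
  induction s with
  | zero => simp [poch_zero]
  | succ s ih => rw [← add_assoc, poch_succ, ih, poch_succ]; push_cast; ring

lemma poch_abs_le (b : ℂ) (K : ℕ) (hK : ‖b‖ ≤ K) (r : ℕ) :
    ‖poch b r‖ * (Nat.factorial K : ℝ) ≤ (Nat.factorial (K + r) : ℝ) := by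
  induction r with
  | zero => simp [poch_zero]
  | succ r ih =>
      rw [poch_succ, norm_mul]
      have h1 : ‖b + r‖ ≤ (K : ℝ) + r + 1 := by
        calc ‖b + r‖ ≤ ‖b‖ + ‖(r : ℂ)‖ := norm_add_le _ _
        _ ≤ (K : ℝ) + r + 1 := by
            simp [Complex.norm_natCast]
            linarith [hK]
      calc ‖poch b r‖ * ‖(b : ℂ) + r‖ * (Nat.factorial K : ℝ)
          = (‖poch b r‖ * (Nat.factorial K : ℝ)) * ‖b + r‖ := by ring
        _ ≤ (Nat.factorial (K + r) : ℝ) * ((K : ℝ) + r + 1) := by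
            apply mul_le_mul ih h1 (norm_nonneg _) (by positivity)
        _ = (Nat.factorial (K + r + 1) : ℝ) := by
            rw [Nat.factorial_succ]; push_cast; ring
        _ = (Nat.factorial (K + (r + 1)) : ℝ) := by ring_nf

lemma poch_div_fact_le (b : ℂ) (K : ℕ) (hK : ‖b‖ ≤ K) (r : ℕ) :
    ‖poch b r‖ / (Nat.factorial r : ℝ) ≤ ((r + K).choose K : ℝ) := by
  have h := poch_abs_le b K hK r
  have hch : ((r + K).choose K : ℝ) * (Nat.factorial K : ℝ) * (Nat.factorial r : ℝ)
      = (Nat.factorial (K + r) : ℝ) := by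
    have := Nat.choose_mul_factorial_mul_factorial (Nat.le_add_left K r)
    have h2 : r + K - K = r := by omega
    rw [h2] at this
    rw [show K + r = r + K by ring]
    exact_mod_cast this
  rw [div_le_iff₀ (by positivity)]
  have hKf : (0:ℝ) < (Nat.factorial K : ℝ) := by positivity
  nlinarith [hKf, Nat.factorial_pos r, h]

lemma hasSum_binom (b : ℂ) {z : ℂ} (hz : ‖z‖ < 1) :
    HasSum (fun r : ℕ => poch b r / (Nat.factorial r : ℂ) * z ^ r) ((1 - z) ^ (-b)) := by
  set R : ℝ := (1 + ‖z‖) / 2 with hRdef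
  have hR0 : 0 < R := by positivity
  have hR1 : R < 1 := by rw [hRdef]; linarith
  have hzR : ‖z‖ < R := by rw [hRdef]; linarith
  set K : ℕ := ⌈‖b‖⌉₊ with hKdef
  have hbK : ‖b‖ ≤ K := Nat.le_ceil _
  have hRnorm : ‖R‖ < 1 := by rw [Real.norm_eq_abs, abs_of_pos hR0]; exact hR1
  -- summability of the series at any w with |w| ≤ R
  have hsum : ∀ w : ℂ, ‖w‖ ≤ R →
      Summable (fun r : ℕ => poch b r / (Nat.factorial r : ℂ) * w ^ r) := by
    intro w hw
    apply Summable.of_norm_bounded (summable_choose_mul_geometric_of_norm_lt_one K hRnorm)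
    intro r
    have : ‖poch b r / (Nat.factorial r : ℂ) * w ^ r‖
        = ‖poch b r‖ / (Nat.factorial r : ℝ) * (‖w‖) ^ r := by
      simp [map_div₀, map_pow, Complex.norm_natCast]
    rw [this]
    apply mul_le_mul (poch_div_fact_le b K hbK r)
      (pow_le_pow_left₀ (norm_nonneg _) hw r) (by positivity)
      (by positivity)
  -- bound on derivative terms
  have hu : Summable (fun r : ℕ => ((K + 1 : ℝ) / R) * (((r + (K + 1)).choose (K + 1) : ℝ) * R ^ r)) :=
    (summable_choose_mul_geometric_of_norm_lt_one (K + 1) hRnorm).mul_left _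
  have hg' : ∀ (r : ℕ) (w : ℂ), w ∈ Metric.ball (0 : ℂ) R →
      ‖poch b r / (Nat.factorial r : ℂ) * ((r : ℂ) * w ^ (r - 1))‖
        ≤ ((K + 1 : ℝ) / R) * (((r + (K + 1)).choose (K + 1) : ℝ) * R ^ r) := by
    intro r w hw
    have hwR : ‖w‖ < R := by simpa [Complex.dist_eq] using hw
    have h1 : ‖poch b r / (Nat.factorial r : ℂ) * ((r : ℂ) * w ^ (r - 1))‖
        = ‖poch b r‖ / (Nat.factorial r : ℝ) * ((r : ℝ) * (‖w‖) ^ (r - 1)) := by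
      simp [map_div₀, map_pow, Complex.norm_natCast]
    rw [h1]
    have h2 : ‖poch b r‖ / (Nat.factorial r : ℝ) * ((r : ℝ) * (‖w‖) ^ (r - 1))
        ≤ ((r + K).choose K : ℝ) * ((r : ℝ) * R ^ (r - 1)) := by
      apply mul_le_mul (poch_div_fact_le b K hbK r) _ (by positivity) (by positivity)
      exact mul_le_mul_of_nonneg_left
        (pow_le_pow_left₀ (norm_nonneg _) hwR.le _) (by positivity)
    refine h2.trans ?_
    -- r * choose (r+K) K ≤ (K+1) * choose (r+K+1) (K+1)
    have h3 : (r : ℝ) * ((r + K).choose K : ℝ) ≤ (K + 1 : ℝ) * ((r + (K + 1)).choose (K + 1) : ℝ) := by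
      have := Nat.add_one_mul_choose_eq (r + K) K
      have h4 : r * ((r + K).choose K) ≤ (K + 1) * ((r + (K + 1)).choose (K + 1)) := by
        calc r * ((r + K).choose K) ≤ (r + K + 1) * ((r + K).choose K) :=
              Nat.mul_le_mul_right _ (by omega)
          _ = (r + K + 1).choose (K + 1) * (K + 1) := this
          _ = (K + 1) * ((r + (K + 1)).choose (K + 1)) := by rw [show r + K + 1 = r + (K+1) by ring]; ring
      exact_mod_cast h4
    have h5 : R ^ (r - 1) ≤ R ^ r / R := by
      rcases Nat.eq_zero_or_pos r with h | h
      · subst h; simp only [Nat.zero_sub, pow_zero]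
        rw [le_div_iff₀ hR0, one_mul]; exact hR1.le
      · rw [show r = (r - 1) + 1 by omega, pow_succ, mul_div_assoc,
          div_self hR0.ne', mul_one, Nat.add_sub_cancel]
    calc ((r + K).choose K : ℝ) * ((r : ℝ) * R ^ (r - 1))
        ≤ ((K + 1 : ℝ) * ((r + (K + 1)).choose (K + 1) : ℝ)) * (R ^ r / R) := by
          have hnn : (0:ℝ) ≤ ((r + K).choose K : ℝ) * (r : ℝ) := by positivity
          calc ((r + K).choose K : ℝ) * ((r : ℝ) * R ^ (r - 1))
              = ((r:ℝ) * ((r + K).choose K : ℝ)) * R ^ (r-1) := by ring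
            _ ≤ ((K + 1 : ℝ) * ((r + (K + 1)).choose (K + 1) : ℝ)) * (R ^ r / R) :=
                mul_le_mul h3 h5 (by positivity) (by positivity)
      _ = ((K + 1 : ℝ) / R) * (((r + (K + 1)).choose (K + 1) : ℝ) * R ^ r) := by ring
  have hzmem : (0:ℂ) ∈ Metric.ball (0:ℂ) R := by simpa using hR0
  have hg0 : Summable (fun r : ℕ => poch b r / (Nat.factorial r : ℂ) * (0:ℂ) ^ r) :=
    hsum 0 (by simpa using hR0.le)
  have hderiv : ∀ w ∈ Metric.ball (0:ℂ) R,
      HasDerivAt (fun v : ℂ => ∑' r : ℕ, poch b r / (Nat.factorial r : ℂ) * v ^ r)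
        (∑' r : ℕ, poch b r / (Nat.factorial r : ℂ) * ((r:ℂ) * w ^ (r-1))) w := by
    intro w hw
    exact hasDerivAt_tsum_of_isPreconnected
      (g' := fun (r : ℕ) (v : ℂ) => poch b r / (Nat.factorial r : ℂ) * ((r:ℂ) * v ^ (r-1)))
      hu Metric.isOpen_ball
      (convex_ball _ _).isPreconnected
      (fun r v _ => HasDerivAt.const_mul _ (hasDerivAt_pow r v)) hg' hzmem hg0 hw
  have key : ∀ w ∈ Metric.ball (0:ℂ) R,
      (1 - w) * (∑' r : ℕ, poch b r / (Nat.factorial r : ℂ) * ((r:ℂ) * w ^ (r-1)))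
        = b * ∑' r : ℕ, poch b r / (Nat.factorial r : ℂ) * w ^ r := by
    intro w hw
    have hwR : ‖w‖ < R := by simpa [Complex.dist_eq] using hw
    have hF : HasSum (fun r : ℕ => poch b r / (Nat.factorial r : ℂ) * w ^ r)
        (∑' r : ℕ, poch b r / (Nat.factorial r : ℂ) * w ^ r) := (hsum w hwR.le).hasSum
    have hD : HasSum (fun r : ℕ => poch b r / (Nat.factorial r : ℂ) * ((r:ℂ) * w ^ (r-1)))
        (∑' r : ℕ, poch b r / (Nat.factorial r : ℂ) * ((r:ℂ) * w ^ (r-1))) :=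
      (Summable.of_norm_bounded hu (fun r => hg' r w hw)).hasSum
    set D := ∑' r : ℕ, poch b r / (Nat.factorial r : ℂ) * ((r:ℂ) * w ^ (r-1)) with hDdef
    have hfact : ∀ r : ℕ, ((Nat.factorial r : ℕ) : ℂ) ≠ 0 :=
      fun r => Nat.cast_ne_zero.mpr (Nat.factorial_ne_zero r)
    have hD1 : HasSum (fun r : ℕ => poch b (r+1) / (Nat.factorial r : ℂ) * w ^ r) D := by
      have h0 : (fun r : ℕ => poch b (r+1) / (Nat.factorial r : ℂ) * w ^ r)
          = fun r : ℕ => poch b (r+1) / (Nat.factorial (r+1) : ℂ)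
              * (((r+1 : ℕ) : ℂ) * w ^ ((r+1) - 1)) := by
        funext r
        have h2 : ((r:ℂ)+1) ≠ 0 := Nat.cast_add_one_ne_zero r
        have hf := hfact r
        rw [Nat.factorial_succ, Nat.add_sub_cancel]
        push_cast
        field_simp
      rw [h0]
      have h3 := (hasSum_nat_add_iff'
        (f := fun r : ℕ => poch b r / (Nat.factorial r : ℂ) * ((r:ℂ) * w ^ (r-1))) 1).mpr hD
      simpa using h3
    have hwD : HasSum (fun r : ℕ => (r:ℂ) * poch b r / (Nat.factorial r : ℂ) * w ^ r) (w * D) := by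
      have h1 := hD1.mul_left w
      have h2 : (fun r : ℕ => w * (poch b (r+1) / (Nat.factorial r : ℂ) * w ^ r))
          = fun r : ℕ => ((r+1 : ℕ) : ℂ) * poch b (r+1) / (Nat.factorial (r+1) : ℂ) * w ^ (r+1) := by
        funext r
        have h2 : ((r:ℂ)+1) ≠ 0 := Nat.cast_add_one_ne_zero r
        have hf := hfact r
        rw [Nat.factorial_succ]
        push_cast
        field_simp
        ring
      rw [h2] at h1
      have h3 := (hasSum_nat_add_iff
        (f := fun r : ℕ => (r:ℂ) * poch b r / (Nat.factorial r : ℂ) * w ^ r) 1).mp h1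
      simpa using h3
    have hsub := hD1.sub hwD
    have heq : (fun r : ℕ => poch b (r+1) / (Nat.factorial r : ℂ) * w ^ r
          - (r:ℂ) * poch b r / (Nat.factorial r : ℂ) * w ^ r)
        = fun r : ℕ => b * (poch b r / (Nat.factorial r : ℂ) * w ^ r) := by
      funext r; rw [poch_succ]; ring
    rw [heq] at hsub
    have hfin := hsub.unique (hF.mul_left b)
    linear_combination hfin
  have hG : ∀ w ∈ Metric.ball (0:ℂ) R,
      HasDerivAt (fun v : ℂ => (1 - v) ^ b * ∑' r : ℕ, poch b r / (Nat.factorial r : ℂ) * v ^ r)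
        0 w := by
    intro w hw
    have hwR : ‖w‖ < R := by simpa [Complex.dist_eq] using hw
    have hw1 : ‖w‖ < 1 := hwR.trans hR1
    have hre : 0 < (1 - w).re := by
      have h1 := Complex.re_le_norm w
      have h2 : (1 - w).re = 1 - w.re := by simp
      linarith
    have hne : (1 : ℂ) - w ≠ 0 := fun h => by simp [h] at hre
    have h1 : HasDerivAt (fun v : ℂ => (1 - v) ^ b) (b * (1 - w) ^ (b - 1) * (-1)) w :=
      ((hasDerivAt_id w).const_sub 1).cpow_const (Or.inl hre)
    have h2 := h1.mul (hderiv w hw)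
    convert h2 using 1
    · rfl
    · rfl
    · rfl
    have hpow : (1 - w) ^ b = (1 - w) ^ (b - 1) * (1 - w) := by
      conv_lhs => rw [show b = b - 1 + 1 by ring]
      rw [Complex.cpow_add _ _ hne, Complex.cpow_one]
    rw [hpow]
    linear_combination (-(1 - w) ^ (b - 1)) * (key w hw)
  have hGconst :
      (1 - z) ^ b * (∑' r : ℕ, poch b r / (Nat.factorial r : ℂ) * z ^ r)
        = (1 - (0:ℂ)) ^ b * ∑' r : ℕ, poch b r / (Nat.factorial r : ℂ) * (0:ℂ) ^ r := by
    have hzmem' : z ∈ Metric.ball (0:ℂ) R := by simpa [Complex.dist_eq] using hzR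
    exact Convex.is_const_of_fderivWithin_eq_zero (convex_ball (0:ℂ) R)
      (fun v hv => ((hG v hv).differentiableAt).differentiableWithinAt)
      (fun v hv => by
        rw [fderivWithin_of_isOpen Metric.isOpen_ball hv, (hG v hv).hasFDerivAt.fderiv]
        ext u; simp) hzmem' hzmem
  have hF0 : ∑' r : ℕ, poch b r / (Nat.factorial r : ℂ) * (0:ℂ) ^ r = 1 := by
    rw [tsum_eq_single 0]
    · simp [poch_zero]
    · intro r hr; simp [zero_pow hr]
  rw [hF0, sub_zero, Complex.one_cpow, mul_one] at hGconst
  have hne : (1:ℂ) - z ≠ 0 := by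
    intro h
    rw [sub_eq_zero] at h
    rw [← h] at hz
    simp at hz
  have hFz : ∑' r : ℕ, poch b r / (Nat.factorial r : ℂ) * z ^ r = (1 - z) ^ (-b) := by
    rw [Complex.cpow_neg]
    exact eq_inv_of_mul_eq_one_left (by linear_combination hGconst)
  have := (hsum z hzR.le).hasSum
  rwa [hFz] at this

/-- The second discrete Appell function `𝓕₂⁽²⁾(a,b₁,b₂;c₁,c₂;t,k,x,y)`.
Since `(−t)_{(m+n)k} = 0` once `(m+n)k > t` (for `k ≥ 1`), the doubly infinite sum
reduces to this finite sum. -/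
noncomputable def F2two (a b₁ b₂ c₁ c₂ : ℂ) (t k : ℕ) (x y : ℂ) : ℂ :=
  ∑ m ∈ Finset.range (t + 1), ∑ n ∈ Finset.range (t + 1),
    poch a (m + n) * poch b₁ m * poch b₂ n * (-1 : ℂ) ^ ((m + n) * k)
      * poch (-(t : ℂ)) ((m + n) * k) * x ^ m * y ^ n
    / (poch c₁ m * poch c₂ n * (Nat.factorial m : ℂ) * (Nat.factorial n : ℂ))

/-- The infinite summation formula for `𝓕₂⁽²⁾`:
`Σ_{r≥0} ((a)_r/r!) z^r 𝓕₂⁽²⁾(a+r, b₁, b₂; c₁, c₂; t, k, x, y)` converges, with sum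
`(1−z)^{−a} 𝓕₂⁽²⁾(a, b₁, b₂; c₁, c₂; t, k, x/(1−z), y/(1−z))`, for `|z| < 1`. -/
theorem infinite_summation_formula_two (a b₁ b₂ c₁ c₂ : ℂ) (k : ℕ) (hk : 0 < k)
    (hc₁ : ∀ n : ℕ, c₁ ≠ -(n : ℂ)) (hc₂ : ∀ n : ℕ, c₂ ≠ -(n : ℂ))
    (t : ℕ) (z : ℂ) (hz : ‖z‖ < 1) (x y : ℂ) :
    HasSum
      (fun r : ℕ =>
        poch a r / (Nat.factorial r : ℂ) * z ^ r * F2two (a + r) b₁ b₂ c₁ c₂ t k x y)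
      ((1 - z) ^ (-a) * F2two a b₁ b₂ c₁ c₂ t k (x / (1 - z)) (y / (1 - z))) := by
  have hne : (1:ℂ) - z ≠ 0 := by
    intro h
    rw [sub_eq_zero] at h
    rw [← h] at hz
    simp at hz
  have hmain : ∀ m n : ℕ,
      HasSum (fun r : ℕ => poch a r / (Nat.factorial r : ℂ) * z ^ r *
          (poch (a + r) (m + n) * poch b₁ m * poch b₂ n * (-1 : ℂ) ^ ((m + n) * k)
            * poch (-(t : ℂ)) ((m + n) * k) * x ^ m * y ^ n
          / (poch c₁ m * poch c₂ n * (Nat.factorial m : ℂ) * (Nat.factorial n : ℂ))))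
        ((1 - z) ^ (-a) *
          (poch a (m + n) * poch b₁ m * poch b₂ n * (-1 : ℂ) ^ ((m + n) * k)
            * poch (-(t : ℂ)) ((m + n) * k) * (x / (1 - z)) ^ m * (y / (1 - z)) ^ n
          / (poch c₁ m * poch c₂ n * (Nat.factorial m : ℂ) * (Nat.factorial n : ℂ)))) := by
    intro m n
    have hb := hasSum_binom (a + ((m + n : ℕ) : ℂ)) hz
    have h1 := hb.mul_left (poch a (m + n) * (poch b₁ m * poch b₂ n * (-1 : ℂ) ^ ((m + n) * k)
      * poch (-(t : ℂ)) ((m + n) * k) * x ^ m * y ^ n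
      / (poch c₁ m * poch c₂ n * (Nat.factorial m : ℂ) * (Nat.factorial n : ℂ))))
    have hid : ∀ r : ℕ, poch a r * poch (a + r) (m + n)
        = poch a (m + n) * poch (a + ((m + n : ℕ) : ℂ)) r := by
      intro r
      rw [← poch_add, ← poch_add, add_comm r (m + n)]
    convert h1 using 1
    · rfl
    · funext r
      simp only [div_eq_mul_inv, mul_inv]
      linear_combination (z ^ r * ((Nat.factorial r : ℂ))⁻¹ * poch b₁ m * poch b₂ n
        * (-1 : ℂ) ^ ((m + n) * k) * poch (-(t : ℂ)) ((m + n) * k) * x ^ m * y ^ n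
        * (poch c₁ m)⁻¹ * (poch c₂ n)⁻¹ * ((Nat.factorial m : ℂ))⁻¹
        * ((Nat.factorial n : ℂ))⁻¹) * hid r
    · rw [neg_add, Complex.cpow_add _ _ hne, Complex.cpow_neg, Complex.cpow_neg,
        Complex.cpow_natCast, div_pow, div_pow, pow_add]
      simp only [div_eq_mul_inv, mul_inv]
      ring
  simp only [F2two, Finset.mul_sum]
  exact hasSum_sum (fun m _ => hasSum_sum (fun n _ => hmain m n))
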